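/- For every real r, all complex numbers s, t, and every ρ > 0, the circle integral ∮_{|z|=ρ} i(rz−1)(z+r)(sz−1)(z+conj(s))(tz−1)(z+conj(t))/z⁴ dz (over the circle of radius ρ centered at 0, counterclockwise) equals −2π·[ (r²−1)·((|s|²−1)(|t|²−1) − s·conj(t) − conj(s)·t) − r·((|s|²−1)(t+conj(t)) + (|t|²−1)(s+conj(s))) ]. -/

import Mathlib

open Complex Real


lemma circleIntegral_add' {f g : ℂ → ℂ} {c : ℂ} {R : ℝ} (hf : CircleIntegrable f c R)
    (hg : CircleIntegrable g c R) :
    (∮ z in C(c, R), (f z + g z)) = (∮ z in C(c, R), f z) + ∮ z in C(c, R), g z := by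
  simp only [circleIntegral, smul_add, intervalIntegral.integral_add hf.out hg.out]

lemma cI_zpow {ρ : ℝ} (hρ : 0 < ρ) (a : ℂ) (n : ℤ) :
    CircleIntegrable (fun z : ℂ => a * z ^ n) 0 ρ := by
  apply ContinuousOn.circleIntegrable hρ.le
  refine continuousOn_const.mul (continuousOn_id.zpow₀ n fun z hz => Or.inl ?_)
  simp only [mem_sphere_iff_norm, sub_zero] at hz
  intro h
  rw [id_eq] at h
  rw [h, norm_zero] at hz
  exact hρ.ne' hz.symm

lemma int_zpow_ne {ρ : ℝ} (a : ℂ) {n : ℤ} (hn : n ≠ -1) :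
    (∮ z in C(0, ρ), a * z ^ n) = 0 := by
  rw [circleIntegral.integral_const_mul]
  have := circleIntegral.integral_sub_zpow_of_ne hn 0 0 ρ
  simp only [sub_zero] at this
  rw [this, mul_zero]

lemma int_zpow_inv {ρ : ℝ} (hρ : 0 < ρ) (a : ℂ) :
    (∮ z in C(0, ρ), a * z ^ (-1 : ℤ)) = a * (2 * π * I) := by
  rw [circleIntegral.integral_const_mul]
  have := circleIntegral.integral_sub_inv_of_mem_ball (Metric.mem_ball_self hρ : (0:ℂ) ∈ Metric.ball 0 ρ)
  simp only [sub_zero] at this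
  simp only [zpow_neg, zpow_one, this]

lemma key_int {ρ : ℝ} (hρ : 0 < ρ) (a0 a1 a2 a3 a4 a5 a6 : ℂ) (f : ℂ → ℂ)
    (hf : ∀ z : ℂ, z ≠ 0 → f z =
      a0 * z ^ (-4:ℤ) + a1 * z ^ (-3:ℤ) + a2 * z ^ (-2:ℤ) + a3 * z ^ (-1:ℤ)
        + a4 * z ^ (0:ℤ) + a5 * z ^ (1:ℤ) + a6 * z ^ (2:ℤ)) :
    (∮ z in C(0, ρ), f z) = a3 * (2 * π * I) := by
  have hne : ∀ z ∈ Metric.sphere (0:ℂ) ρ, z ≠ 0 := by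
    intro z hz h
    simp only [mem_sphere_iff_norm, sub_zero] at hz
    rw [h, norm_zero] at hz; exact hρ.ne' hz.symm
  rw [circleIntegral.integral_congr hρ.le (fun z hz => hf z (hne z hz))]
  have c0 := cI_zpow hρ a0 (-4)
  have c1 := cI_zpow hρ a1 (-3)
  have c2 := cI_zpow hρ a2 (-2)
  have c3 := cI_zpow hρ a3 (-1)
  have c4 := cI_zpow hρ a4 0
  have c5 := cI_zpow hρ a5 1
  have c6 := cI_zpow hρ a6 2
  have s01 : CircleIntegrable (fun z : ℂ => a0 * z ^ (-4:ℤ) + a1 * z ^ (-3:ℤ)) 0 ρ := c0.add c1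
  have s02 : CircleIntegrable (fun z : ℂ => a0 * z ^ (-4:ℤ) + a1 * z ^ (-3:ℤ)
      + a2 * z ^ (-2:ℤ)) 0 ρ := s01.add c2
  have s03 : CircleIntegrable (fun z : ℂ => a0 * z ^ (-4:ℤ) + a1 * z ^ (-3:ℤ)
      + a2 * z ^ (-2:ℤ) + a3 * z ^ (-1:ℤ)) 0 ρ := s02.add c3
  have s04 : CircleIntegrable (fun z : ℂ => a0 * z ^ (-4:ℤ) + a1 * z ^ (-3:ℤ)
      + a2 * z ^ (-2:ℤ) + a3 * z ^ (-1:ℤ) + a4 * z ^ (0:ℤ)) 0 ρ := s03.add c4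
  have s05 : CircleIntegrable (fun z : ℂ => a0 * z ^ (-4:ℤ) + a1 * z ^ (-3:ℤ)
      + a2 * z ^ (-2:ℤ) + a3 * z ^ (-1:ℤ) + a4 * z ^ (0:ℤ) + a5 * z ^ (1:ℤ)) 0 ρ := s04.add c5
  rw [circleIntegral_add' s05 c6, circleIntegral_add' s04 c5, circleIntegral_add' s03 c4,
    circleIntegral_add' s02 c3, circleIntegral_add' s01 c2, circleIntegral_add' c0 c1,
    int_zpow_ne a0 (by norm_num), int_zpow_ne a1 (by norm_num), int_zpow_ne a2 (by norm_num),
    int_zpow_inv hρ a3, int_zpow_ne a4 (by norm_num), int_zpow_ne a5 (by norm_num),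
    int_zpow_ne a6 (by norm_num)]
  ring


set_option maxHeartbeats 2000000 in
theorem stmt_5 (r : ℝ) (s t : ℂ) (ρ : ℝ) (hρ : 0 < ρ) :
    (∮ z in C(0, ρ),
        Complex.I * ((r : ℂ) * z - 1) * (z + (r : ℂ)) * (s * z - 1) * (z + (starRingEnd ℂ) s)
          * (t * z - 1) * (z + (starRingEnd ℂ) t) / z ^ 4)
      = -(2 * (Real.pi : ℂ)
          * (((r : ℂ) ^ 2 - 1)
              * (((‖s‖ : ℂ) ^ 2 - 1) * ((‖t‖ : ℂ) ^ 2 - 1)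
                  - s * (starRingEnd ℂ) t - (starRingEnd ℂ) s * t)
            - (r : ℂ)
              * (((‖s‖ : ℂ) ^ 2 - 1) * (t + (starRingEnd ℂ) t)
                  + ((‖t‖ : ℂ) ^ 2 - 1) * (s + (starRingEnd ℂ) s)))) := by
  have hE := key_int hρ
    (Complex.I * ((-1:ℂ)*(r:ℂ)*((starRingEnd ℂ) s)*((starRingEnd ℂ) t)))
    (Complex.I * ((-1:ℂ)*((starRingEnd ℂ) s)*((starRingEnd ℂ) t) + (-1:ℂ)*(r:ℂ)*((starRingEnd ℂ) t) + (-1:ℂ)*(r:ℂ)*((starRingEnd ℂ) s) + (1:ℂ)*(r:ℂ)*((starRingEnd ℂ) s)*t*((starRingEnd ℂ) t) + (1:ℂ)*(r:ℂ)*s*((starRingEnd ℂ) s)*((starRingEnd ℂ) t) + (1:ℂ)*(r:ℂ)*(r:ℂ)*((starRingEnd ℂ) s)*((starRingEnd ℂ) t)))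
    (Complex.I * ((-1:ℂ)*((starRingEnd ℂ) t) + (-1:ℂ)*((starRingEnd ℂ) s) + (1:ℂ)*((starRingEnd ℂ) s)*t*((starRingEnd ℂ) t) + (1:ℂ)*s*((starRingEnd ℂ) s)*((starRingEnd ℂ) t) + (-1:ℂ)*(r:ℂ) + (1:ℂ)*(r:ℂ)*t*((starRingEnd ℂ) t) + (1:ℂ)*(r:ℂ)*((starRingEnd ℂ) s)*((starRingEnd ℂ) t) + (1:ℂ)*(r:ℂ)*((starRingEnd ℂ) s)*t + (1:ℂ)*(r:ℂ)*s*((starRingEnd ℂ) t) + (1:ℂ)*(r:ℂ)*s*((starRingEnd ℂ) s) + (-1:ℂ)*(r:ℂ)*s*((starRingEnd ℂ) s)*t*((starRingEnd ℂ) t) + (1:ℂ)*(r:ℂ)*(r:ℂ)*((starRingEnd ℂ) t) + (1:ℂ)*(r:ℂ)*(r:ℂ)*((starRingEnd ℂ) s) + (-1:ℂ)*(r:ℂ)*(r:ℂ)*((starRingEnd ℂ) s)*t*((starRingEnd ℂ) t) + (-1:ℂ)*(r:ℂ)*(r:ℂ)*s*((starRingEnd ℂ) s)*((starRingEnd ℂ)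 t)))
    (Complex.I * ((-1:ℂ) + (1:ℂ)*t*((starRingEnd ℂ) t) + (1:ℂ)*((starRingEnd ℂ) s)*t + (1:ℂ)*s*((starRingEnd ℂ) t) + (1:ℂ)*s*((starRingEnd ℂ) s) + (-1:ℂ)*s*((starRingEnd ℂ) s)*t*((starRingEnd ℂ) t) + (1:ℂ)*(r:ℂ)*((starRingEnd ℂ) t) + (1:ℂ)*(r:ℂ)*t + (1:ℂ)*(r:ℂ)*((starRingEnd ℂ) s) + (-1:ℂ)*(r:ℂ)*((starRingEnd ℂ) s)*t*((starRingEnd ℂ) t) + (1:ℂ)*(r:ℂ)*s + (-1:ℂ)*(r:ℂ)*s*t*((starRingEnd ℂ) t) + (-1:ℂ)*(r:ℂ)*s*((starRingEnd ℂ) s)*((starRingEnd ℂ) t) + (-1:ℂ)*(r:ℂ)*s*((starRingEnd ℂ) s)*t + (1:ℂ)*(r:ℂ)*(r:ℂ) + (-1:ℂ)*(r:ℂ)*(r:ℂ)*t*((starRingEnd ℂ) t) + (-1:ℂ)*(r:ℂ)*(r:ℂ)*((starRingEnd ℂ) s)*t + (-1:ℂ)*(r:ℂ)*(r:ℂ)*s*((starRingEnd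 ℂ) t) + (-1:ℂ)*(r:ℂ)*(r:ℂ)*s*((starRingEnd ℂ) s) + (1:ℂ)*(r:ℂ)*(r:ℂ)*s*((starRingEnd ℂ) s)*t*((starRingEnd ℂ) t)))
    (Complex.I * ((1:ℂ)*t + (1:ℂ)*s + (-1:ℂ)*s*t*((starRingEnd ℂ) t) + (-1:ℂ)*s*((starRingEnd ℂ) s)*t + (1:ℂ)*(r:ℂ) + (-1:ℂ)*(r:ℂ)*t*((starRingEnd ℂ) t) + (-1:ℂ)*(r:ℂ)*((starRingEnd ℂ) s)*t + (-1:ℂ)*(r:ℂ)*s*((starRingEnd ℂ) t) + (-1:ℂ)*(r:ℂ)*s*t + (-1:ℂ)*(r:ℂ)*s*((starRingEnd ℂ) s) + (1:ℂ)*(r:ℂ)*s*((starRingEnd ℂ) s)*t*((starRingEnd ℂ) t) + (-1:ℂ)*(r:ℂ)*(r:ℂ)*t + (-1:ℂ)*(r:ℂ)*(r:ℂ)*s + (1:ℂ)*(r:ℂ)*(r:ℂ)*s*t*((starRingEnd ℂ) t) + (1:ℂ)*(r:ℂ)*(r:ℂ)*s*((starRingEnd ℂ) s)*t))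
    (Complex.I * ((-1:ℂ)*s*t + (-1:ℂ)*(r:ℂ)*t + (-1:ℂ)*(r:ℂ)*s + (1:ℂ)*(r:ℂ)*s*t*((starRingEnd ℂ) t) + (1:ℂ)*(r:ℂ)*s*((starRingEnd ℂ) s)*t + (1:ℂ)*(r:ℂ)*(r:ℂ)*s*t))
    (Complex.I * ((1:ℂ)*(r:ℂ)*s*t))
    (fun z : ℂ =>
      Complex.I * ((r : ℂ) * z - 1) * (z + (r : ℂ)) * (s * z - 1) * (z + (starRingEnd ℂ) s)
        * (t * z - 1) * (z + (starRingEnd ℂ) t) / z ^ 4)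
    (by
      intro z hz
      have h4 : z ^ (-4:ℤ) = (z ^ 4)⁻¹ := by rw [zpow_neg]; norm_cast
      have h3 : z ^ (-3:ℤ) = (z ^ 3)⁻¹ := by rw [zpow_neg]; norm_cast
      have h2 : z ^ (-2:ℤ) = (z ^ 2)⁻¹ := by rw [zpow_neg]; norm_cast
      have h1 : z ^ (-1:ℤ) = z⁻¹ := by rw [zpow_neg, zpow_one]
      have h0 : z ^ (0:ℤ) = 1 := zpow_zero z
      have hp1 : z ^ (1:ℤ) = z := zpow_one z
      have hp2 : z ^ (2:ℤ) = z ^ 2 := by norm_cast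
      rw [h4, h3, h2, h1, h0, hp1, hp2]
      field_simp [hz]
      ring)
  rw [hE]
  have hs : ((‖s‖ : ℂ)) ^ 2 = s * (starRingEnd ℂ) s := by
    rw [← Complex.ofReal_pow, Complex.sq_norm, Complex.mul_conj]
  have ht : ((‖t‖ : ℂ)) ^ 2 = t * (starRingEnd ℂ) t := by
    rw [← Complex.ofReal_pow, Complex.sq_norm, Complex.mul_conj]
  rw [hs, ht]
  linear_combination (2 * (Real.pi:ℂ) * ((-1:ℂ) + (1:ℂ)*t*((starRingEnd ℂ) t) + (1:ℂ)*((starRingEnd ℂ) s)*t + (1:ℂ)*s*((starRingEnd ℂ) t) + (1:ℂ)*s*((starRingEnd ℂ) s) + (-1:ℂ)*s*((starRingEnd ℂ) s)*t*((starRingEnd ℂ) t) + (1:ℂ)*(r:ℂ)*((starRingEnd ℂ) t) + (1:ℂ)*(r:ℂ)*t + (1:ℂ)*(r:ℂ)*((starRingEnd ℂ) s) + (-1:ℂ)*(r:ℂ)*((starRingEnd ℂ) s)*t*((starRingEnd ℂ) t) + (1:ℂ)*(r:ℂ)*s + (-1:ℂ)*(r:ℂ)*s*t*((starRingEnd ℂ)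 t) + (-1:ℂ)*(r:ℂ)*s*((starRingEnd ℂ) s)*((starRingEnd ℂ) t) + (-1:ℂ)*(r:ℂ)*s*((starRingEnd ℂ) s)*t + (1:ℂ)*(r:ℂ)*(r:ℂ) + (-1:ℂ)*(r:ℂ)*(r:ℂ)*t*((starRingEnd ℂ) t) + (-1:ℂ)*(r:ℂ)*(r:ℂ)*((starRingEnd ℂ) s)*t + (-1:ℂ)*(r:ℂ)*(r:ℂ)*s*((starRingEnd ℂ) t) + (-1:ℂ)*(r:ℂ)*(r:ℂ)*s*((starRingEnd ℂ) s) + (1:ℂ)*(r:ℂ)*(r:ℂ)*s*((starRingEnd ℂ) s)*t*((starRingEnd ℂ) t))) * Complex.I_sq
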